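/- Let f be the Fibonacci word over {0,1} and (F_n) the Fibonacci sequence with F₀ = 0, F₁ = 1, F_{n+2} = F_{n+1} + F_n. Then for every n ≥ 3 and every integer m with F_n − 2 < m ≤ F_{n+1} − 2, one has r(m, f) = F_n + m. -/

import Mathlib

open Filter

/-- `rc n x` : length of the shortest prefix of the infinite word `x` containing two
(possibly overlapping) occurrences of some word of length `n`.  Here `x k` is the
`(k+1)`-st letter of the word. -/
noncomputable def rc {A : Type*} (n : ℕ) (x : ℕ → A) : ℕ :=
  sInf {m | ∃ j, j + n < m ∧ ∀ t < n, x (j + t) = x (m - n + t)}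

/-- iterates of the Fibonacci substitution 0 ↦ 01, 1 ↦ 0, starting from the letter 0 -/
def fibIter : ℕ → List (Fin 2)
  | 0 => [0]
  | n + 1 => (fibIter n).flatMap fun a => if a = 0 then [0, 1] else [0]

/-- the Fibonacci word (0-indexed): `fibWord k` is the `(k+1)`-st letter of the unique
fixed point beginning with 0 of the substitution 0 ↦ 01, 1 ↦ 0 -/
def fibWord (k : ℕ) : Fin 2 := (fibIter (k + 1)).getD k 0

namespace FibAux

def σl (l : List (Fin 2)) : List (Fin 2) := l.flatMap fun a => if a = 0 then [0, 1] else [0]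

lemma fibIter_succ (n : ℕ) : fibIter (n + 1) = σl (fibIter n) := rfl

lemma σl_append (u v : List (Fin 2)) : σl (u ++ v) = σl u ++ σl v :=
  List.flatMap_append

lemma fibIter_add_two (n : ℕ) : fibIter (n + 2) = fibIter (n + 1) ++ fibIter n := by
  induction n with
  | zero => decide
  | succ n ih =>
    rw [show n + 1 + 2 = (n + 2) + 1 from rfl, fibIter_succ (n + 2), ih, σl_append,
      ← fibIter_succ, ← fibIter_succ, show n + 1 + 1 = n + 2 from rfl, ih]

lemma length_fibIter : ∀ n, (fibIter n).length = Nat.fib (n + 2)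
  | 0 => rfl
  | 1 => rfl
  | (n + 2) => by
    rw [fibIter_add_two, List.length_append, length_fibIter (n + 1), length_fibIter n]
    have := Nat.fib_add_two (n := n + 2)
    simp only [show n + 1 + 2 = n + 3 from rfl, show n + 2 + 2 = n + 4 from rfl,
      show n + 2 + 1 = n + 3 from rfl] at *
    omega

lemma count_fibIter : ∀ n, (fibIter n).count 0 = Nat.fib (n + 1)
  | 0 => rfl
  | 1 => rfl
  | (n + 2) => by
    rw [fibIter_add_two, List.count_append, count_fibIter (n + 1), count_fibIter n]
    have := Nat.fib_add_two (n := n + 1)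
    simp only [show n + 1 + 1 = n + 2 from rfl, show n + 2 + 1 = n + 3 from rfl,
      show n + 1 + 2 = n + 3 from rfl] at *
    omega

lemma fibIter_prefix (n : ℕ) : fibIter n <+: fibIter (n + 1) := by
  cases n with
  | zero => exact ⟨[1], rfl⟩
  | succ n => rw [fibIter_add_two]; exact List.prefix_append _ _

lemma fibIter_prefix_le {m n : ℕ} (h : m ≤ n) : fibIter m <+: fibIter n := by
  induction n with
  | zero => have : m = 0 := by omega
            subst this; exact List.prefix_rfl
  | succ n ih =>
    rcases Nat.lt_or_ge m (n + 1) with h' | h'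
    · exact (ih (by omega)).trans (fibIter_prefix n)
    · have : m = n + 1 := by omega
      subst this; exact List.prefix_rfl

lemma lt_fib_add_three : ∀ k : ℕ, k + 2 ≤ Nat.fib (k + 3)
  | 0 => by decide
  | (k + 1) => by
    have ih := lt_fib_add_three k
    have h2 : 0 < Nat.fib (k + 2) := Nat.fib_pos.mpr (by omega)
    have := Nat.fib_add_two (n := k + 2)
    simp only [show k + 2 + 2 = k + 4 from rfl, show k + 2 + 1 = k + 3 from rfl,
      show k + 1 + 3 = k + 4 from rfl] at *
    omega

lemma lt_length_fibIter (k : ℕ) : k < (fibIter (k + 1)).length := by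
  rw [length_fibIter]
  have := lt_fib_add_three k
  simp only [show k + 1 + 2 = k + 3 from rfl] at *
  omega

lemma getD_prefix {u v : List (Fin 2)} (h : u <+: v) {k : ℕ} (hk : k < u.length) :
    v.getD k 0 = u.getD k 0 := by
  rw [List.getD_eq_getElem _ _ hk, List.getD_eq_getElem _ _ (hk.trans_le h.length_le),
    h.getElem hk]

lemma fibWord_eq_getD {n k : ℕ} (h : k < (fibIter n).length) :
    fibWord k = (fibIter n).getD k 0 := by
  unfold fibWord
  rcases Nat.le_total (k + 1) n with h' | h'
  · rw [getD_prefix (fibIter_prefix_le h') (lt_length_fibIter k)]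
  · rw [getD_prefix (fibIter_prefix_le h') h]

lemma fibWord_eq_getElem {n k : ℕ} (h : k < (fibIter n).length) :
    fibWord k = (fibIter n)[k] := by
  rw [fibWord_eq_getD h, List.getD_eq_getElem _ _ h]

lemma AC : ∀ n : ℕ, (fibIter (n + 1) ++ fibIter n).take (Nat.fib (n + 4) - 2)
    = (fibIter n ++ fibIter (n + 1)).take (Nat.fib (n + 4) - 2)
  | 0 => by decide
  | (n + 1) => by
    have ih := AC n
    have hL1 : (fibIter (n + 1)).length = Nat.fib (n + 3) := length_fibIter (n + 1)
    have hrec4 : Nat.fib (n + 4) = Nat.fib (n + 2) + Nat.fib (n + 3) := Nat.fib_add_two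
    have hrec5 : Nat.fib (n + 5) = Nat.fib (n + 3) + Nat.fib (n + 4) := Nat.fib_add_two
    have hf2 : 2 ≤ Nat.fib (n + 4) := by
      have := lt_fib_add_three (n + 1)
      simp only [show n + 1 + 3 = n + 4 from rfl] at this
      omega
    have e1 : fibIter (n + 2) = fibIter (n + 1) ++ fibIter n := fibIter_add_two n
    have hsub : Nat.fib (n + 5) - 2 - (fibIter (n + 1)).length = Nat.fib (n + 4) - 2 := by
      rw [hL1]; omega
    have hle : (fibIter (n + 1)).length ≤ Nat.fib (n + 5) - 2 := by rw [hL1]; omega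
    show (fibIter (n + 2) ++ fibIter (n + 1)).take (Nat.fib (n + 5) - 2)
        = (fibIter (n + 1) ++ fibIter (n + 2)).take (Nat.fib (n + 5) - 2)
    rw [e1, List.append_assoc, List.take_append,
      List.take_append (l₁ := fibIter (n + 1)) (l₂ := fibIter (n + 1) ++ fibIter n),
      List.take_of_length_le hle, hsub, ih]

/-- the period lemma: the Fibonacci word has period `fib (k+2)` on its prefix of
length `fib (k+4) - 2`. -/
lemma fib_period (k i : ℕ) (hi : i + Nat.fib (k + 2) + 2 < Nat.fib (k + 4)) :
    fibWord (i + Nat.fib (k + 2)) = fibWord i := by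
  have hL0 : (fibIter k).length = Nat.fib (k + 2) := length_fibIter k
  have hL1 : (fibIter (k + 1)).length = Nat.fib (k + 3) := length_fibIter (k + 1)
  have hL2 : (fibIter (k + 2)).length = Nat.fib (k + 4) := length_fibIter (k + 2)
  have hrec : Nat.fib (k + 4) = Nat.fib (k + 2) + Nat.fib (k + 3) := Nat.fib_add_two
  have hik : i < Nat.fib (k + 3) := by omega
  have h1 : i + Nat.fib (k + 2) < (fibIter (k + 2)).length := by omega
  have h2 : i + Nat.fib (k + 2) < ((fibIter (k+1) ++ fibIter k).take (Nat.fib (k + 4) - 2)).length := by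
    rw [List.length_take, List.length_append]
    omega
  have h3 : i + Nat.fib (k + 2) < ((fibIter k ++ fibIter (k+1)).take (Nat.fib (k + 4) - 2)).length := by
    rw [List.length_take, List.length_append]
    omega
  calc fibWord (i + Nat.fib (k + 2))
      = (fibIter (k + 2))[i + Nat.fib (k + 2)]'h1 := fibWord_eq_getElem h1
    _ = ((fibIter (k+1) ++ fibIter k).take (Nat.fib (k + 4) - 2))[i + Nat.fib (k + 2)]'h2 := by
        rw [List.getElem_take]
        congr 1
        exact fibIter_add_two k
    _ = ((fibIter k ++ fibIter (k+1)).take (Nat.fib (k + 4) - 2))[i + Nat.fib (k + 2)]'h3 := by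
        congr 1
        exact AC k
    _ = (fibIter k ++ fibIter (k+1))[i + Nat.fib (k + 2)]'(by
          rw [List.length_append]; omega) := List.getElem_take
    _ = (fibIter (k+1))[i]'(by omega) := by
        rw [List.getElem_append_right (by omega)]
        congr 1
        omega
    _ = fibWord i := (fibWord_eq_getElem (by omega)).symm
/-- number of zeros of the Fibonacci word in the window `[q, q+ℓ)` -/
def zc (q ℓ : ℕ) : ℕ := ∑ t ∈ Finset.range ℓ, if fibWord (q + t) = 0 then 1 else 0

lemma zc_succ (q ℓ : ℕ) : zc q (ℓ + 1) = zc q ℓ + if fibWord (q + ℓ) = 0 then 1 else 0 :=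
  Finset.sum_range_succ _ _

lemma zc_zero (q : ℕ) : zc q 0 = 0 := rfl

lemma zc_add (q a b : ℕ) : zc q (a + b) = zc q a + zc (q + a) b := by
  induction b with
  | zero => simp [zc_zero]
  | succ b ih =>
    rw [show a + (b + 1) = (a + b) + 1 from rfl, zc_succ, ih, zc_succ,
      show q + (a + b) = q + a + b by omega]
    omega

lemma zc_mono (q : ℕ) {a b : ℕ} (h : a ≤ b) : zc q a ≤ zc q b := by
  obtain ⟨c, rfl⟩ := Nat.le.dest h
  rw [zc_add]; omega

lemma zc_one (q : ℕ) : zc q 1 = if fibWord q = 0 then 1 else 0 := by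
  have h := zc_succ q 0
  simpa [zc_zero] using h

/-- desubstitution: `psi i` is the starting position of the `i`-th block -/
def psi : ℕ → ℕ
  | 0 => 0
  | i + 1 => psi i + (if fibWord i = 0 then 2 else 1)

lemma psi_succ (i : ℕ) : psi (i + 1) = psi i + (if fibWord i = 0 then 2 else 1) := rfl

lemma psi_lt_succ (i : ℕ) : psi i < psi (i + 1) := by
  rw [psi_succ]; split <;> omega

lemma psi_succ_le (i : ℕ) : psi (i + 1) ≤ psi i + 2 := by
  rw [psi_succ]; split <;> omega

lemma psi_strictMono : StrictMono psi := strictMono_nat_of_lt_succ psi_lt_succ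

lemma psi_diff (a k : ℕ) : psi (a + k) = psi a + k + zc a k := by
  induction k with
  | zero => simp [zc_zero]
  | succ k ih =>
    rw [show a + (k + 1) = (a + k) + 1 from rfl, psi_succ, ih, zc_succ]
    split <;> omega

lemma psi_eq (i : ℕ) : psi i = i + zc 0 i := by
  have h := psi_diff 0 i
  simp only [show psi 0 = 0 from rfl, Nat.zero_add, zero_add] at h
  exact h

lemma length_σl (u : List (Fin 2)) : (σl u).length = u.length + u.count 0 := by
  induction u with
  | nil => rfl
  | cons a t ih =>
    show ((if a = 0 then [0, 1] else [0]) ++ σl t).length = _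
    by_cases h : a = 0 <;>
      simp [h, ih, List.count_cons] <;> omega

lemma σl_cons (a : Fin 2) (t : List (Fin 2)) :
    σl (a :: t) = (if a = 0 then [0, 1] else [0]) ++ σl t := rfl

lemma fin2_cases (a : Fin 2) : a = 0 ∨ a = 1 := by revert a; decide

lemma psi_eq_len {n : ℕ} : ∀ i, i ≤ (fibIter n).length →
    psi i = (σl ((fibIter n).take i)).length := by
  intro i
  induction i with
  | zero => intro _; rfl
  | succ i ih =>
    intro h
    have hi : i < (fibIter n).length := by omega
    have ht : (fibIter n).take (i + 1) = (fibIter n).take i ++ [(fibIter n)[i]] := by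
      rw [List.take_succ, List.getElem?_eq_getElem hi]
      rfl
    rw [ht, σl_append, List.length_append, psi_succ, ← ih (by omega),
      fibWord_eq_getElem hi]
    rcases fin2_cases (fibIter n)[i] with h0 | h0 <;> rw [h0] <;> rfl

/-- the key fixed-point property of the Fibonacci word under the substitution -/
lemma fib_fixed (i : ℕ) : fibWord (psi i) = 0 ∧
    (fibWord i = 0 → fibWord (psi i + 1) = 1) := by
  set n := psi i + i + 1 with hn
  have hin : i < (fibIter n).length := by
    rw [length_fibIter]
    have h1 := lt_fib_add_three i
    have h2 : Nat.fib (i + 3) ≤ Nat.fib (n + 2) := Nat.fib_mono (by omega)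
    omega
  have hlen1 : psi i + 2 ≤ (fibIter (n + 1)).length := by
    rw [length_fibIter]
    have h1 := lt_fib_add_three (psi i + 1)
    have h2 : Nat.fib (psi i + 1 + 3) ≤ Nat.fib (n + 1 + 2) := Nat.fib_mono (by omega)
    omega
  have hpsi : psi i = (σl ((fibIter n).take i)).length := psi_eq_len i (by omega)
  have hdrop : (fibIter n).drop i = (fibIter n)[i] :: (fibIter n).drop (i + 1) :=
    List.drop_eq_getElem_cons hin
  have hsplit : fibIter (n + 1)
      = σl ((fibIter n).take i) ++ σl ((fibIter n)[i] :: (fibIter n).drop (i + 1)) := by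
    rw [← hdrop, ← σl_append, List.take_append_drop]
    rfl
  have hw : fibWord i = (fibIter n)[i] := fibWord_eq_getElem hin
  have key : ∀ k : ℕ, k < 2 → fibWord (psi i + k)
      = (σl ((fibIter n)[i] :: (fibIter n).drop (i + 1))).getD k 0 := by
    intro k hk
    rw [fibWord_eq_getD (n := n + 1) (by omega), hsplit,
      List.getD_append_right _ _ _ _ (by omega)]
    congr 1
    omega
  have k0 := key 0 (by omega)
  have k1 := key 1 (by omega)
  rcases fin2_cases (fibIter n)[i] with h0 | h0
  · rw [h0] at k0 k1
    rw [hw, h0]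
    constructor
    · simpa [σl_cons] using k0
    · intro _
      simpa [σl_cons] using k1
  · rw [h0] at k0
    rw [hw, h0]
    constructor
    · simpa [σl_cons] using k0
    · intro h
      exact absurd h (by decide)
lemma psi_cover (x : ℕ) : ∃ i, psi i ≤ x ∧ x < psi (i + 1) := by
  induction x with
  | zero => exact ⟨0, by simp [show psi 0 = 0 from rfl], psi_lt_succ 0⟩
  | succ x ih =>
    obtain ⟨i, h1, h2⟩ := ih
    rcases Nat.lt_or_ge (x + 1) (psi (i + 1)) with h | h
    · exact ⟨i, by omega, h⟩
    · refine ⟨i + 1, h, ?_⟩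
      have := psi_succ_le (i + 1)
      have := psi_succ_le i
      have := psi_lt_succ (i + 1)
      omega

lemma one_of_not_start {x : ℕ} (h : ∀ i, psi i ≠ x) : fibWord x = 1 := by
  obtain ⟨i, h1, h2⟩ := psi_cover x
  have hne := h i
  have hle := psi_succ_le i
  have hx : x = psi i + 1 := by omega
  have hstep : psi (i + 1) = psi i + 2 := by omega
  have hf : fibWord i = 0 := by
    rcases fin2_cases (fibWord i) with h0 | h0
    · exact h0
    · rw [psi_succ, h0] at hstep
      simp at hstep
  rw [hx]
  exact (fib_fixed i).2 hf

lemma start_of_zero {x : ℕ} (h : fibWord x = 0) : ∃ i, psi i = x := by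
  by_contra hc
  push_neg at hc
  have := one_of_not_start hc
  rw [h] at this
  exact absurd this (by decide)

lemma zero_iff (y : ℕ) : fibWord y = 0 ↔ fibWord (psi y + 1) = 1 := by
  constructor
  · exact (fib_fixed y).2
  · intro h
    rcases fin2_cases (fibWord y) with h0 | h0
    · exact h0
    · exfalso
      have hstep : psi (y + 1) = psi y + 1 := by rw [psi_succ, h0]; simp
      have := (fib_fixed (y + 1)).1
      rw [hstep] at this
      rw [this] at h
      exact absurd h (by decide)

lemma zc_block (a k : ℕ) : zc (psi a) (psi (a + k) - psi a) = k := by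
  induction k with
  | zero => simp [zc_zero]
  | succ k ih =>
    have hmono : psi a ≤ psi (a + k) := psi_strictMono.monotone (by omega)
    set st := (if fibWord (a + k) = 0 then 2 else 1) with hst
    have hstep : psi (a + (k + 1)) = psi (a + k) + st := psi_succ (a + k)
    have hblock : zc (psi (a + k)) st = 1 := by
      rcases fin2_cases (fibWord (a + k)) with h0 | h0
      · have : st = 2 := by rw [hst, if_pos h0]
        rw [this, show (2 : ℕ) = 1 + 1 from rfl, zc_add, zc_one, zc_one,
          (fib_fixed (a + k)).1, (fib_fixed (a + k)).2 h0]
        simp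
      · have : st = 1 := by rw [hst, if_neg (by simp [h0])]
        rw [this, zc_one, (fib_fixed (a + k)).1]
        simp
    have e : psi (a + (k + 1)) - psi a = (psi (a + k) - psi a) + st := by omega
    rw [e, zc_add, ih]
    have : psi a + (psi (a + k) - psi a) = psi (a + k) := by omega
    rw [this, hblock]

lemma zc_eq_count (n : ℕ) : ∀ L, L ≤ (fibIter n).length →
    zc 0 L = ((fibIter n).take L).count 0 := by
  intro L
  induction L with
  | zero => intro _; rfl
  | succ L ih =>
    intro h
    have hL : L < (fibIter n).length := by omega
    have ht : (fibIter n).take (L + 1) = (fibIter n).take L ++ [(fibIter n)[L]] := by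
      rw [List.take_succ, List.getElem?_eq_getElem hL]
      rfl
    rw [ht, List.count_append, zc_succ, ← ih (by omega), Nat.zero_add,
      fibWord_eq_getElem hL]
    rcases fin2_cases (fibIter n)[L] with h0 | h0 <;> rw [h0] <;> simp
lemma psi_ge (i : ℕ) : i ≤ psi i := by
  have := psi_eq i
  omega

lemma zc_prefix (k : ℕ) : zc 0 (Nat.fib (k + 3)) = Nat.fib (k + 2) := by
  have h := zc_eq_count (k + 1) (fibIter (k + 1)).length le_rfl
  rw [List.take_length, count_fibIter] at h
  rw [length_fibIter] at h
  exact h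

lemma psi_fib (k : ℕ) : psi (Nat.fib (k + 3)) = Nat.fib (k + 4) := by
  rw [psi_eq, zc_prefix]
  have : Nat.fib (k + 4) = Nat.fib (k + 2) + Nat.fib (k + 3) := Nat.fib_add_two
  omega

lemma zc_no_start {q r : ℕ} (h : ∀ i, ¬(q ≤ psi i ∧ psi i < q + r)) : zc q r = 0 := by
  apply Finset.sum_eq_zero
  intro t ht
  rw [Finset.mem_range] at ht
  have h1 : fibWord (q + t) = 1 := by
    apply one_of_not_start
    intro i hi
    exact h i ⟨by omega, by omega⟩
  rw [h1]
  simp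

lemma window_count (q ℓ : ℕ) : ∃ a B : ℕ, a ≤ B ∧ zc q ℓ = B - a ∧ q ≤ psi a ∧
    psi a ≤ q + 1 ∧ q + ℓ ≤ psi B ∧ (∀ j, j < B → psi j < q + ℓ) := by
  have hexa : ∃ i, q ≤ psi i := ⟨q, psi_ge q⟩
  have hexB : ∃ i, q + ℓ ≤ psi i := ⟨q + ℓ, psi_ge (q + ℓ)⟩
  set a := Nat.find hexa with ha
  set B := Nat.find hexB with hB
  have haq : q ≤ psi a := Nat.find_spec hexa
  have hBq : q + ℓ ≤ psi B := Nat.find_spec hexB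
  have hamin : ∀ j, j < a → psi j < q := by
    intro j hj
    have := Nat.find_min hexa hj
    omega
  have hBmin : ∀ j, j < B → psi j < q + ℓ := by
    intro j hj
    have := Nat.find_min hexB hj
    omega
  have hab : a ≤ B := by
    by_contra hc
    have := hamin B (by omega)
    omega
  have ha1 : psi a ≤ q + 1 := by
    obtain ⟨i, h1, h2⟩ := psi_cover q
    have hle := psi_succ_le i
    rcases Nat.lt_or_ge q (psi i + 1) with h | h
    · -- psi i = q : a ≤ i
      have : a ≤ i := by
        by_contra hc
        have := hamin i (by omega)
        omega
      have := psi_strictMono.monotone this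
      omega
    · -- q = psi i + 1, psi (i+1) = q + 1
      have hstep : psi (i + 1) = q + 1 := by omega
      have : a ≤ i + 1 := by
        by_contra hc
        have := hamin (i + 1) (by omega)
        omega
      have := psi_strictMono.monotone this
      omega
  refine ⟨a, B, hab, ?_, haq, ha1, hBq, hBmin⟩
  rcases Nat.eq_or_lt_of_le hab with he | hlt
  · -- a = B : no starts in window
    rw [← he]
    have : zc q ℓ = 0 := by
      apply zc_no_start
      intro i ⟨h1, h2⟩
      have hia : a ≤ i := by
        by_contra hc
        have := hamin i (by omega)
        omega
      have := psi_strictMono.monotone hia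
      rw [← he] at hBq
      omega
    omega
  · -- a < B
    have hpaB : psi a < q + ℓ := hBmin a hlt
    have e1 : ℓ = (psi a - q) + (q + ℓ - psi a) := by omega
    have z1 : zc q (psi a - q) = 0 := by
      apply zc_no_start
      intro i ⟨h1, h2⟩
      have hia : a ≤ i := by
        by_contra hc
        have := hamin i (by omega)
        omega
      have := psi_strictMono.monotone hia
      omega
    have e2 : psi B - psi a = (q + ℓ - psi a) + (psi B - (q + ℓ)) := by omega
    have z2 : zc (q + ℓ) (psi B - (q + ℓ)) = 0 := by
      apply zc_no_start
      intro i ⟨h1, h2⟩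
      have hiB : B ≤ i := by
        by_contra hc
        have := hBmin i (by omega)
        omega
      have := psi_strictMono.monotone hiB
      omega
    have hblock : zc (psi a) (psi B - psi a) = B - a := by
      have := zc_block a (B - a)
      rw [show a + (B - a) = B by omega] at this
      exact this
    rw [e2, zc_add, show psi a + (q + ℓ - psi a) = q + ℓ by omega, z2] at hblock
    calc zc q ℓ = zc q ((psi a - q) + (q + ℓ - psi a)) := by rw [← e1]
      _ = zc q (psi a - q) + zc (psi a) (q + ℓ - psi a) := by
          rw [zc_add, show q + (psi a - q) = psi a by omega]
      _ = B - a := by omega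

lemma two_le_fib (k : ℕ) : 2 ≤ Nat.fib (k + 3) := by
  have := lt_fib_add_three k
  omega

/-- balance bounds: windows of length `fib (n+3) - 2` have at most `fib (n+2) - 1` zeros,
and windows of length `fib (n+3) - 1` have at least `fib (n+2) - 1` zeros. -/
lemma CD : ∀ n : ℕ, (∀ q, zc q (Nat.fib (n + 3) - 2) ≤ Nat.fib (n + 2) - 1)
    ∧ (∀ q, Nat.fib (n + 2) - 1 ≤ zc q (Nat.fib (n + 3) - 1)) := by
  intro n
  induction n with
  | zero =>
    constructor
    · intro q
      show zc q (Nat.fib 3 - 2) ≤ Nat.fib 2 - 1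
      rw [show Nat.fib 3 - 2 = 0 by decide]
      simp [zc_zero]
    · intro q
      show Nat.fib 2 - 1 ≤ _
      rw [show Nat.fib 2 - 1 = 0 by decide]
      omega
  | succ n ih =>
    obtain ⟨hC, hD⟩ := ih
    have hf2 : 1 ≤ Nat.fib (n + 2) := Nat.fib_pos.mpr (by omega)
    have hf3 : 2 ≤ Nat.fib (n + 3) := two_le_fib n
    have hrec4 : Nat.fib (n + 4) = Nat.fib (n + 2) + Nat.fib (n + 3) := Nat.fib_add_two
    constructor
    · intro q
      show zc q (Nat.fib (n + 4) - 2) ≤ Nat.fib (n + 3) - 1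
      by_contra hc
      push_neg at hc
      obtain ⟨a, B, hab, hzc, ha1, ha2, hB1, hB2⟩ := window_count q (Nat.fib (n + 4) - 2)
      have hBa : Nat.fib (n + 3) ≤ B - a := by omega
      set b := B - 1 with hb
      have hba : Nat.fib (n + 3) - 1 ≤ b - a := by omega
      have hdiff : psi b = psi a + (b - a) + zc a (b - a) := by
        have := psi_diff a (b - a)
        rw [show a + (b - a) = b by omega] at this
        exact this
      have hz1 : Nat.fib (n + 2) - 1 ≤ zc a (b - a) :=
        le_trans (hD a) (zc_mono a hba)
      have hpb : psi b < q + (Nat.fib (n + 4) - 2) := hB2 b (by omega)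
      omega
    · intro q
      show Nat.fib (n + 3) - 1 ≤ zc q (Nat.fib (n + 4) - 1)
      by_contra hc
      push_neg at hc
      obtain ⟨a, B, hab, hzc, ha1, ha2, hB1, hB2⟩ := window_count q (Nat.fib (n + 4) - 1)
      have hBa : B - a ≤ Nat.fib (n + 3) - 2 := by omega
      have hdiff : psi B = psi a + (B - a) + zc a (B - a) := by
        have := psi_diff a (B - a)
        rw [show a + (B - a) = B by omega] at this
        exact this
      have hz1 : zc a (B - a) ≤ Nat.fib (n + 2) - 1 :=
        le_trans (zc_mono a hBa) (hC a)
      omega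
lemma prev_zero {x : ℕ} (h : fibWord x = 1) : 1 ≤ x ∧ fibWord (x - 1) = 0 := by
  obtain ⟨i, h1, h2⟩ := psi_cover x
  have hle := psi_succ_le i
  have hz := (fib_fixed i).1
  have hx : x ≠ psi i := by
    intro he
    rw [← he] at hz
    rw [hz] at h
    exact absurd h (by decide)
  have hx1 : x = psi i + 1 := by omega
  constructor
  · omega
  · rw [hx1]
    simpa using hz

lemma letter_eq {y z : ℕ} (h : fibWord (psi y + 1) = fibWord (psi z + 1)) :
    fibWord y = fibWord z := by
  rcases fin2_cases (fibWord y) with h0 | h0 <;> rcases fin2_cases (fibWord z) with h1 | h1 <;>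
    rw [h0, h1]
  · exfalso
    have hy := (zero_iff y).mp h0
    have hz : fibWord (psi z + 1) ≠ 1 := fun hh => by
      have := (zero_iff z).mpr hh
      rw [this] at h1
      exact absurd h1 (by decide)
    rw [hy] at h
    exact hz h.symm
  · exfalso
    have hz := (zero_iff z).mp h1
    have hy : fibWord (psi y + 1) ≠ 1 := fun hh => by
      have := (zero_iff y).mpr hh
      rw [this] at h0
      exact absurd h0 (by decide)
    rw [hz] at h
    exact hy h

/-- the first `fib (n+3)` windows of length `fib (n+3) - 1` of the Fibonacci word
are pairwise distinct -/
lemma star : ∀ n : ℕ, ∀ j p : ℕ, j < p → p ≤ Nat.fib (n + 3) - 1 →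
    ∃ t, t < Nat.fib (n + 3) - 1 ∧ fibWord (j + t) ≠ fibWord (p + t) := by
  intro n
  induction n with
  | zero =>
    intro j p hjp hple
    have hp : p = 1 := by
      have : Nat.fib (0 + 3) = 2 := by decide
      omega
    have hj : j = 0 := by omega
    subst hp hj
    exact ⟨0, by decide, by decide⟩
  | succ n ih =>
    intro j p hjp hple
    by_contra hcon
    push_neg at hcon
    have hf2 : 1 ≤ Nat.fib (n + 2) := Nat.fib_pos.mpr (by omega)
    have hf3 : 2 ≤ Nat.fib (n + 3) := two_le_fib n
    have hrec4 : Nat.fib (n + 4) = Nat.fib (n + 2) + Nat.fib (n + 3) := Nat.fib_add_two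
    have hple' : p ≤ Nat.fib (n + 4) - 1 := hple
    have hcon' : ∀ t, t < Nat.fib (n + 4) - 1 → fibWord (j + t) = fibWord (p + t) := by
      intro t ht
      by_contra hne
      exact absurd (hcon t ht) (by simpa using hne)
    -- Step A : reduce to windows starting with the letter 0
    obtain ⟨j₁, p₁, hj₁p₁, hp₁le, hj₁0, hp₁0, H₁⟩ :
        ∃ j₁ p₁, j₁ < p₁ ∧ p₁ ≤ Nat.fib (n + 4) - 1 ∧ fibWord j₁ = 0 ∧ fibWord p₁ = 0 ∧
          ∀ t, t < Nat.fib (n + 4) - 1 → fibWord (j₁ + t) = fibWord (p₁ + t) := by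
      have h00 : fibWord j = fibWord p := by
        have := hcon' 0 (by omega)
        simpa using this
      rcases fin2_cases (fibWord j) with hj0 | hj1
      · exact ⟨j, p, hjp, hple', hj0, by rw [← h00, hj0], hcon'⟩
      · have hp1 : fibWord p = 1 := by rw [← h00, hj1]
        obtain ⟨hj1', hjz⟩ := prev_zero hj1
        obtain ⟨hp1', hpz⟩ := prev_zero hp1
        refine ⟨j - 1, p - 1, by omega, by omega, hjz, hpz, ?_⟩
        intro t ht
        rcases Nat.eq_zero_or_pos t with rfl | htpos
        · rw [Nat.add_zero, Nat.add_zero, hjz, hpz]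
        · have e1 : j - 1 + t = j + (t - 1) := by omega
          have e2 : p - 1 + t = p + (t - 1) := by omega
          rw [e1, e2]
          exact hcon' (t - 1) (by omega)
    -- Step B : desubstitute the two starting positions
    obtain ⟨j', hj'⟩ := start_of_zero hj₁0
    obtain ⟨p', hp'⟩ := start_of_zero hp₁0
    have hj'p' : j' < p' := by
      have : psi j' < psi p' := by rw [hj', hp']; omega
      exact psi_strictMono.lt_iff_lt.mp this
    have hp'le : p' ≤ Nat.fib (n + 3) - 1 := by
      have h1 : psi p' < psi (Nat.fib (n + 3)) := by
        rw [hp', psi_fib n]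
        omega
      have := psi_strictMono.lt_iff_lt.mp h1
      omega
    -- bound on the growth of psi over the desubstituted window
    have hδ : ∀ s, s ≤ Nat.fib (n + 3) - 2 → s + zc j' s ≤ Nat.fib (n + 4) - 3 := by
      intro s hs
      have h1 : zc j' s ≤ zc j' (Nat.fib (n + 3) - 2) := zc_mono j' hs
      have h2 := (CD n).1 j'
      omega
    -- Step C : the desubstituted windows agree
    have claim : ∀ s, s ≤ Nat.fib (n + 3) - 2 →
        psi (p' + s) = psi p' + (s + zc j' s) ∧ fibWord (j' + s) = fibWord (p' + s) := by
      intro s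
      induction s with
      | zero =>
        intro _
        refine ⟨by simp [zc_zero], ?_⟩
        apply letter_eq
        simp only [Nat.add_zero]
        rw [hj', hp']
        exact H₁ 1 (by omega)
      | succ s ihs =>
        intro hs
        obtain ⟨e1, e2⟩ := ihs (by omega)
        have hpsj : psi (j' + s) = psi j' + (s + zc j' s) := by
          have := psi_diff j' s
          omega
        have hst : psi (j' + (s + 1)) = psi (j' + s) + (if fibWord (j' + s) = 0 then 2 else 1) :=
          psi_succ (j' + s)
        have hst' : psi (p' + (s + 1)) = psi (p' + s) + (if fibWord (p' + s) = 0 then 2 else 1) :=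
          psi_succ (p' + s)
        have hzs : zc j' (s + 1) = zc j' s + (if fibWord (j' + s) = 0 then 1 else 0) :=
          zc_succ j' s
        have hdn : psi (p' + (s + 1)) = psi p' + ((s + 1) + zc j' (s + 1)) := by
          rw [hst', ← e2, e1, hzs]
          split <;> omega
        refine ⟨hdn, ?_⟩
        apply letter_eq
        have hj1e : psi (j' + (s + 1)) = psi j' + ((s + 1) + zc j' (s + 1)) := by
          have := psi_diff j' (s + 1)
          omega
        have hbd : (s + 1) + zc j' (s + 1) ≤ Nat.fib (n + 4) - 3 := hδ (s + 1) hs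
        have hH := H₁ ((s + 1) + zc j' (s + 1) + 1) (by omega)
        rw [hj1e, hdn, hj', hp']
        rw [show j₁ + ((s + 1) + zc j' (s + 1)) + 1 = j₁ + ((s + 1) + zc j' (s + 1) + 1) by omega,
          show p₁ + ((s + 1) + zc j' (s + 1)) + 1 = p₁ + ((s + 1) + zc j' (s + 1) + 1) by omega]
        exact hH
    -- contradiction with the induction hypothesis
    obtain ⟨t, ht, hne⟩ := ih j' p' hj'p' hp'le
    exact hne (claim t (by omega)).2
end FibAux

theorem rc_fibWord (n : ℕ) (hn : 3 ≤ n) (m : ℕ)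
    (h1 : Nat.fib n - 2 < m) (h2 : m ≤ Nat.fib (n + 1) - 2) :
    rc m fibWord = Nat.fib n + m := by
  open FibAux in
  obtain ⟨k, rfl⟩ : ∃ k, n = k + 3 := ⟨n - 3, by omega⟩
  have hf2 : 1 ≤ Nat.fib (k + 2) := Nat.fib_pos.mpr (by omega)
  have hf3 : 2 ≤ Nat.fib (k + 3) := two_le_fib k
  have hrec4 : Nat.fib (k + 4) = Nat.fib (k + 2) + Nat.fib (k + 3) := Nat.fib_add_two
  have hrec5 : Nat.fib (k + 5) = Nat.fib (k + 3) + Nat.fib (k + 4) := Nat.fib_add_two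
  have h2' : m ≤ Nat.fib (k + 4) - 2 := h2
  have h1' : Nat.fib (k + 3) - 2 < m := h1
  have hper : ∀ t, t < m → fibWord (t + Nat.fib (k + 3)) = fibWord t := by
    intro t ht
    have hcond : t + Nat.fib (k + 1 + 2) + 2 < Nat.fib (k + 1 + 4) := by
      simp only [show k + 1 + 2 = k + 3 from rfl, show k + 1 + 4 = k + 5 from rfl]
      omega
    have hp := fib_period (k + 1) t hcond
    simpa only [show k + 1 + 2 = k + 3 from rfl] using hp
  have hmem : (Nat.fib (k + 3) + m)
      ∈ {M | ∃ j, j + m < M ∧ ∀ t < m, fibWord (j + t) = fibWord (M - m + t)} := by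
    refine ⟨0, by omega, fun t ht => ?_⟩
    rw [Nat.zero_add, show Nat.fib (k + 3) + m - m + t = t + Nat.fib (k + 3) by omega]
    exact (hper t ht).symm
  show sInf _ = _
  apply le_antisymm (Nat.sInf_le hmem)
  apply le_csInf ⟨_, hmem⟩
  intro M hM
  by_contra hlt
  push_neg at hlt
  obtain ⟨j, hj, hag⟩ := hM
  set p := M - m with hp
  have hjp : j < p := by omega
  have hple : p ≤ Nat.fib (k + 3) - 1 := by omega
  obtain ⟨t, ht, hne⟩ := star k j p hjp hple
  have : fibWord (j + t) = fibWord (p + t) := hag t (by omega)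
  exact hne this
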